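/- For every finite simple graph without isolated vertices, all reals 1 ≤ p ≤ q, and every x ∈ ℝ^n∖{0}: p·(2·F_p(Φ_{q/p}(x)))^{1/p} ≤ q·(2·F_q(x))^{1/q}, which is equivalent to F_p(Φ_{q/p}(x)) ≤ 2^{p/q−1}·(q/p)^p·F_q(x)^{p/q}. Moreover, if p < q and F_q(x) > 0, then the inequality is strict. -/

import Mathlib

open scoped BigOperators Pointwise NNReal Classical

noncomputable section

/-! ### The graph `p`-Laplacian: Rayleigh quotients, genus, variational eigenvalues -/

/-- `Σ_{{i,j}∈E} |x_i − x_j|^p` (each unordered edge counted once). -/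
def TVp {n : ℕ} (G : SimpleGraph (Fin n)) [DecidableRel G.Adj] (p : ℝ) (x : Fin n → ℝ) : ℝ :=
  (∑ i : Fin n, ∑ j : Fin n, if G.Adj i j then |x i - x j| ^ p else 0) / 2

/-- `Σ_{i∈V} deg(i)·|x_i|^p`. -/
def Np {n : ℕ} (G : SimpleGraph (Fin n)) [DecidableRel G.Adj] (p : ℝ) (x : Fin n → ℝ) : ℝ :=
  ∑ i : Fin n, (G.degree i : ℝ) * |x i| ^ p

/-- The `p`-Rayleigh quotient `F_p`. -/
def Fp {n : ℕ} (G : SimpleGraph (Fin n)) [DecidableRel G.Adj] (p : ℝ) (x : Fin n → ℝ) : ℝ :=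
  TVp G p x / Np G p x

/-- A set is (centrally) symmetric if `S = -S`. -/
def SymmSet {n : ℕ} (S : Set (Fin n → ℝ)) : Prop := ∀ x ∈ S, -x ∈ S

/-- There is a continuous odd map from `S` to the unit sphere `𝕊^{k-1} ⊂ ℝ^k`. -/
def HasOddMapToSphere {n : ℕ} (S : Set (Fin n → ℝ)) (k : ℕ) : Prop :=
  ∃ φ : (Fin n → ℝ) → EuclideanSpace ℝ (Fin k),
    ContinuousOn φ S ∧ (∀ x ∈ S, ‖φ x‖ = 1) ∧ ∀ x ∈ S, φ (-x) = -φ x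

/-- There is a continuous odd map from the unit sphere `𝕊^{k-1} ⊂ ℝ^k` to `S`. -/
def HasOddMapFromSphere {n : ℕ} (S : Set (Fin n → ℝ)) (k : ℕ) : Prop :=
  ∃ φ : EuclideanSpace ℝ (Fin k) → (Fin n → ℝ),
    ContinuousOn φ (Metric.sphere (0 : EuclideanSpace ℝ (Fin k)) 1) ∧
    (∀ x ∈ Metric.sphere (0 : EuclideanSpace ℝ (Fin k)) 1, φ x ∈ S) ∧
    ∀ x ∈ Metric.sphere (0 : EuclideanSpace ℝ (Fin k)) 1, φ (-x) = -φ x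

/-- The Krasnoselskii genus `γ⁻`. -/
def genNeg {n : ℕ} (S : Set (Fin n → ℝ)) : ℕ :=
  if S.Nonempty ∧ SymmSet S then sInf {k | 1 ≤ k ∧ HasOddMapToSphere S k} else 0

/-- The index `γ⁺`. -/
def genPos {n : ℕ} (S : Set (Fin n → ℝ)) : ℕ :=
  if S.Nonempty ∧ SymmSet S then sSup {k | 1 ≤ k ∧ HasOddMapFromSphere S k} else 0

/-- Admissible sets for the min-max principle: symmetric compact subsets of `ℝ^n∖{0}`. -/
def Admissible {n : ℕ} (S : Set (Fin n → ℝ)) : Prop :=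
  IsCompact S ∧ (0 : Fin n → ℝ) ∉ S ∧ SymmSet S

/-- The variational eigenvalues `λ_k⁻(Δ_p)`. -/
def lamNeg {n : ℕ} (G : SimpleGraph (Fin n)) [DecidableRel G.Adj] (p : ℝ) (k : ℕ) : ℝ :=
  sInf {r | ∃ S : Set (Fin n → ℝ), Admissible S ∧ k ≤ genNeg S ∧ r = sSup (Fp G p '' S)}

/-- The min-max eigenvalues `λ_k⁺(Δ_p)`. -/
def lamPos {n : ℕ} (G : SimpleGraph (Fin n)) [DecidableRel G.Adj] (p : ℝ) (k : ℕ) : ℝ :=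
  sInf {r | ∃ S : Set (Fin n → ℝ), Admissible S ∧ k ≤ genPos S ∧ r = sSup (Fp G p '' S)}

/-! ### Eigenpairs of `Δ_p` -/

/-- The set-valued sign: `Sgn(t) = {1}` if `t>0`, `[-1,1]` if `t=0`, `{-1}` if `t<0`. -/
def Sgn (t : ℝ) : Set ℝ := if 0 < t then {1} else if t < 0 then {-1} else Set.Icc (-1) 1

/-- Eigenpairs of the graph `p`-Laplacian for `p > 1`.  (Note that for `t = 0` the
expression `|t|^(p-2) * t` equals `0`, matching the convention `|t|^{p-2}t = 0`.) -/
def IsEigenpairP {n : ℕ} (G : SimpleGraph (Fin n)) [DecidableRel G.Adj] (p lam : ℝ)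
    (x : Fin n → ℝ) : Prop :=
  x ≠ 0 ∧ ∀ i, (∑ j : Fin n, if G.Adj i j then |x i - x j| ^ (p - 2) * (x i - x j) else 0) =
    lam * (G.degree i : ℝ) * (|x i| ^ (p - 2) * x i)

/-- Eigenpairs of the graph `1`-Laplacian. -/
def IsEigenpair1 {n : ℕ} (G : SimpleGraph (Fin n)) [DecidableRel G.Adj] (lam : ℝ)
    (x : Fin n → ℝ) : Prop :=
  x ≠ 0 ∧ ∃ z : Fin n → Fin n → ℝ,
    (∀ i j, G.Adj i j → z i j ∈ Sgn (x i - x j)) ∧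
    (∀ i j, G.Adj i j → z i j = -z j i) ∧
    ∀ i, (∑ j : Fin n, if G.Adj i j then z i j else 0) ∈
      (fun s => lam * (G.degree i : ℝ) * s) '' Sgn (x i)

/-- Eigenpairs of `Δ_p` for `p ≥ 1` (with the `1`-Laplacian convention at `p = 1`). -/
def IsEigenpair {n : ℕ} (G : SimpleGraph (Fin n)) [DecidableRel G.Adj] (p lam : ℝ)
    (x : Fin n → ℝ) : Prop :=
  (p = 1 ∧ IsEigenpair1 G lam x) ∨ (1 < p ∧ IsEigenpairP G p lam x)

/-! ### Cheeger constants -/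

/-- `|∂A|`: the number of edges with exactly one endpoint in `A`. -/
def eBoundary {n : ℕ} (G : SimpleGraph (Fin n)) [DecidableRel G.Adj] (A : Finset (Fin n)) : ℕ :=
  ∑ i ∈ A, ∑ j ∈ Aᶜ, if G.Adj i j then 1 else 0

/-- `vol(A) = Σ_{i∈A} deg(i)`. -/
def volG {n : ℕ} (G : SimpleGraph (Fin n)) [DecidableRel G.Adj] (A : Finset (Fin n)) : ℕ :=
  ∑ i ∈ A, G.degree i

/-- The multi-way Cheeger constants `h_k`. -/
def cheeger {n : ℕ} (G : SimpleGraph (Fin n)) [DecidableRel G.Adj] (k : ℕ) : ℝ :=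
  sInf {r | ∃ A : Fin k → Finset (Fin n), (∀ i, (A i).Nonempty) ∧
    (∀ i j, i ≠ j → Disjoint (A i) (A j)) ∧
    r = ⨆ i, (eBoundary G (A i) : ℝ) / (volG G (A i) : ℝ)}
/-! ### The map Φ -/

/-- `Φ_c(x)_i = |x_i|^c · sign(x_i)`. -/
def Phi {n : ℕ} (c : ℝ) (x : Fin n → ℝ) : Fin n → ℝ := fun i => |x i| ^ c * Real.sign (x i)

/-! ### The simplicial complex `K_n` and the modified Cheeger constants -/

/-- The vector `1_A - 1_B`. -/
def charVec {n : ℕ} (A B : Finset (Fin n)) : Fin n → ℝ :=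
  fun i => if i ∈ A then 1 else if i ∈ B then -1 else 0

/-- The inclusion order on pairs of sets: `(A,B) ≺ (A',B')` iff `A ⊆ A'` and `B ⊆ B'`. -/
def pairLE {n : ℕ} (a b : Finset (Fin n) × Finset (Fin n)) : Prop := a.1 ⊆ b.1 ∧ a.2 ⊆ b.2

/-- The geometric realization `|K(𝒜)|`: the union over all chains of elements of `𝒜` of the
convex hulls of the corresponding vectors `1_A - 1_B`. -/
def geomComplex {n : ℕ} (𝒜 : Set (Finset (Fin n) × Finset (Fin n))) : Set (Fin n → ℝ) :=
  ⋃ (C : Set (Finset (Fin n) × Finset (Fin n))) (_ : C ⊆ 𝒜) (_ : IsChain pairLE C),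
    convexHull ℝ ((fun ab => charVec ab.1 ab.2) '' C)

/-- The modified combinatorial `k`-way Cheeger constant `ĥ_k⁻`. -/
def hHatNeg {n : ℕ} (G : SimpleGraph (Fin n)) [DecidableRel G.Adj] (k : ℕ) : ℝ :=
  sInf {r | ∃ 𝒜 : Set (Finset (Fin n) × Finset (Fin n)),
    (∀ ab ∈ 𝒜, Disjoint ab.1 ab.2 ∧ (ab.1 ∪ ab.2).Nonempty) ∧
    k ≤ genNeg (geomComplex 𝒜) ∧
    r = sSup ((fun ab : Finset (Fin n) × Finset (Fin n) =>
      ((eBoundary G ab.1 : ℝ) + (eBoundary G ab.2 : ℝ)) / (volG G (ab.1 ∪ ab.2) : ℝ)) '' 𝒜)}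

/-! ### Subpartitions into cliques and the pseudo-independence number -/

/-- `c(V_i) = 1` if `|V_i| ≤ 2` and `c(V_i) = 2` if `|V_i| ≥ 3`. -/
def cOf {n : ℕ} (A : Finset (Fin n)) : ℕ := if A.card ≤ 2 then 1 else 2

/-- A subpartition of `V` into sets each inducing a complete subgraph of `G`. -/
def IsCliqueSubpartition {n : ℕ} (G : SimpleGraph (Fin n)) (P : Finset (Finset (Fin n))) : Prop :=
  (∀ A ∈ P, A.Nonempty ∧ G.IsClique (A : Set (Fin n))) ∧
    ∀ A ∈ P, ∀ B ∈ P, A ≠ B → Disjoint A B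

/-- The members of `P` are pairwise non-adjacent: every edge of `G` meets at most one of them. -/
def PairwiseNonAdjacent {n : ℕ} (G : SimpleGraph (Fin n)) (P : Finset (Finset (Fin n))) : Prop :=
  ∀ i j, G.Adj i j → ∀ A ∈ P, ∀ B ∈ P, (i ∈ A ∨ j ∈ A) → (i ∈ B ∨ j ∈ B) → A = B

/-- The pseudo-independence number `α_*(G)`. -/
def pseudoIndepNum {n : ℕ} (G : SimpleGraph (Fin n)) : ℕ :=
  sSup {m | ∃ P : Finset (Finset (Fin n)), IsCliqueSubpartition G P ∧
    PairwiseNonAdjacent G P ∧ m = ∑ A ∈ P, cOf A}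

/-- `h_*(P)`. -/
def hStar {n : ℕ} (G : SimpleGraph (Fin n)) [DecidableRel G.Adj]
    (P : Finset (Finset (Fin n))) : ℝ :=
  sInf {r | ∃ A : Finset (Fin n), A.Nonempty ∧ (∀ v ∈ A, ∃ W ∈ P, v ∈ W) ∧
    (∀ W ∈ P, (A ∩ W).card ≤ 1) ∧ r = (eBoundary G A : ℝ) / (volG G A : ℝ)}

/-! ### The set-valued 1-Laplacian and the p-Laplacian operator -/

/-- The set `Δ_1 x`. -/
def Delta1Set {n : ℕ} (G : SimpleGraph (Fin n)) [DecidableRel G.Adj] (x : Fin n → ℝ) :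
    Set (Fin n → ℝ) :=
  {v | ∃ z : Fin n → Fin n → ℝ,
    (∀ i j, G.Adj i j → z i j ∈ Sgn (x i - x j)) ∧
    (∀ i j, G.Adj i j → z i j = -z j i) ∧
    v = fun i => ∑ j : Fin n, if G.Adj i j then z i j else 0}

/-- The `p`-Laplacian `Δ_p x` for `p > 1`. -/
def DeltaP {n : ℕ} (G : SimpleGraph (Fin n)) [DecidableRel G.Adj] (p : ℝ) (x : Fin n → ℝ) :
    Fin n → ℝ :=
  fun i => ∑ j : Fin n, if G.Adj i j then |x i - x j| ^ (p - 2) * (x i - x j) else 0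

/-- The normalized eigenspace `Ŝ_λ(Δ_p)`. -/
def hatS {n : ℕ} (G : SimpleGraph (Fin n)) [DecidableRel G.Adj] (p lam : ℝ) :
    Set (Fin n → ℝ) :=
  {x | ‖x‖ = 1 ∧ IsEigenpair G p lam x}


/-! ### Auxiliary lemmas for stmt16 -/




-- m * 2^(1-m) ≤ 1 for 0 < m ≤ 1, strict if m < 1
lemma st16_m2_lt {m : ℝ} (hm0 : 0 < m) (hm1 : m < 1) : m * 2 ^ (1 - m) < 1 := by
  have h1 : Real.log m < m - 1 := Real.log_lt_sub_one_of_pos hm0 hm1.ne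
  have h2 : Real.log 2 ≤ 1 := by have := Real.log_two_lt_d9; linarith
  have hl2 : 0 < Real.log 2 := Real.log_pos (by norm_num)
  have key : Real.log m + (1 - m) * Real.log 2 < 0 := by nlinarith
  have heq : m * 2 ^ (1 - m) = Real.exp (Real.log m + (1 - m) * Real.log 2) := by
    rw [Real.exp_add, Real.exp_log hm0, Real.rpow_def_of_pos two_pos]; ring_nf
  rw [heq]
  calc Real.exp (Real.log m + (1 - m) * Real.log 2) < Real.exp 0 := Real.exp_lt_exp.2 key
    _ = 1 := Real.exp_zero

lemma st16_m2_le {m : ℝ} (hm0 : 0 < m) (hm1 : m ≤ 1) : m * 2 ^ (1 - m) ≤ 1 := by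
  rcases eq_or_lt_of_le hm1 with h | h
  · subst h; norm_num
  · exact (st16_m2_lt hm0 h).le

-- 2^(1-1/c) ≤ c for c ≥ 1, strict if c > 1
lemma st16_c2_le {c : ℝ} (hc : 1 ≤ c) : (2:ℝ) ^ (1 - 1/c) ≤ c := by
  have hc0 : 0 < c := by linarith
  have h1 : (1:ℝ) - 1/c ≤ Real.log c := by
    have := Real.log_le_sub_one_of_pos (show (0:ℝ) < 1/c by positivity)
    rw [Real.log_div one_ne_zero hc0.ne', Real.log_one] at this
    linarith
  have h2 : Real.log 2 ≤ 1 := by have := Real.log_two_lt_d9; linarith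
  have h3 : (0:ℝ) ≤ 1 - 1/c := by
    have : 1/c ≤ 1 := by rw [div_le_one hc0]; linarith
    linarith
  have key : (1 - 1/c) * Real.log 2 ≤ Real.log c := by nlinarith
  calc (2:ℝ) ^ (1 - 1/c) = Real.exp ((1 - 1/c) * Real.log 2) := by
        rw [Real.rpow_def_of_pos two_pos, mul_comm]
    _ ≤ Real.exp (Real.log c) := Real.exp_le_exp.2 key
    _ = c := Real.exp_log hc0

lemma st16_c2_lt {c : ℝ} (hc : 1 < c) : (2:ℝ) ^ (1 - 1/c) < c := by
  have hc0 : 0 < c := by linarith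
  have h1 : (1:ℝ) - 1/c ≤ Real.log c := by
    have := Real.log_le_sub_one_of_pos (show (0:ℝ) < 1/c by positivity)
    rw [Real.log_div one_ne_zero hc0.ne', Real.log_one] at this
    linarith
  have h2 : Real.log 2 < 1 := by have := Real.log_two_lt_d9; linarith
  have h3 : (0:ℝ) < 1 - 1/c := by
    have : 1/c < 1 := by rw [div_lt_one hc0]; linarith
    linarith
  have key : (1 - 1/c) * Real.log 2 < Real.log c := by nlinarith
  calc (2:ℝ) ^ (1 - 1/c) = Real.exp ((1 - 1/c) * Real.log 2) := by
        rw [Real.rpow_def_of_pos two_pos, mul_comm]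
    _ < Real.exp (Real.log c) := Real.exp_lt_exp.2 key
    _ = c := Real.exp_log hc0



lemma st16_mid_le {m s t : ℝ} (hm1 : m ≤ 1) (hs : 0 < s) (ht : 0 < t) :
    2 * (((s + t)/2) ^ (m-1)) ≤ s ^ (m-1) + t ^ (m-1) := by
  by_cases hm : m - 1 = 0
  · rw [hm]; norm_num
  have hneg : m - 1 < 0 := lt_of_le_of_ne (by linarith) hm
  have hw : 0 < (s + t) / 2 := by linarith
  have h1 : s ^ (m-1) + t ^ (m-1) ≥ 2 * ((s*t) ^ ((m-1)/2)) := by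
    have e1 : s ^ (m-1) = (s ^ ((m-1)/2))^2 := by
      rw [← Real.rpow_natCast (s ^ ((m-1)/2)) 2, ← Real.rpow_mul hs.le]; norm_num
    have e2 : t ^ (m-1) = (t ^ ((m-1)/2))^2 := by
      rw [← Real.rpow_natCast (t ^ ((m-1)/2)) 2, ← Real.rpow_mul ht.le]; norm_num
    have e3 : (s*t) ^ ((m-1)/2) = s ^ ((m-1)/2) * t ^ ((m-1)/2) :=
      Real.mul_rpow hs.le ht.le
    rw [e1, e2, e3]
    nlinarith [sq_nonneg (s ^ ((m-1)/2) - t ^ ((m-1)/2))]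
  have h2 : (((s+t)/2)^2 : ℝ) ^ ((m-1)/2) ≤ (s*t) ^ ((m-1)/2) := by
    apply Real.rpow_le_rpow_of_nonpos (by positivity)
    · nlinarith [sq_nonneg (s - t)]
    · linarith
  have h3 : (((s+t)/2)^2 : ℝ) ^ ((m-1)/2) = ((s+t)/2) ^ (m-1) := by
    rw [← Real.rpow_natCast ((s+t)/2) 2, ← Real.rpow_mul hw.le]; ring_nf
  linarith

lemma st16_mid_lt {m s t : ℝ} (hm : m < 1) (hs : 0 < s) (ht : 0 < t) (hst : s ≠ t) :
    2 * (((s + t)/2) ^ (m-1)) < s ^ (m-1) + t ^ (m-1) := by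
  have hw : 0 < (s + t) / 2 := by linarith
  have h1 : s ^ (m-1) + t ^ (m-1) ≥ 2 * ((s*t) ^ ((m-1)/2)) := by
    have e1 : s ^ (m-1) = (s ^ ((m-1)/2))^2 := by
      rw [← Real.rpow_natCast (s ^ ((m-1)/2)) 2, ← Real.rpow_mul hs.le]; norm_num
    have e2 : t ^ (m-1) = (t ^ ((m-1)/2))^2 := by
      rw [← Real.rpow_natCast (t ^ ((m-1)/2)) 2, ← Real.rpow_mul ht.le]; norm_num
    have e3 : (s*t) ^ ((m-1)/2) = s ^ ((m-1)/2) * t ^ ((m-1)/2) :=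
      Real.mul_rpow hs.le ht.le
    rw [e1, e2, e3]
    nlinarith [sq_nonneg (s ^ ((m-1)/2) - t ^ ((m-1)/2))]
  have h2 : (((s+t)/2)^2 : ℝ) ^ ((m-1)/2) < (s*t) ^ ((m-1)/2) := by
    apply Real.rpow_lt_rpow_of_neg (by positivity)
    · nlinarith [sq_pos_of_ne_zero (sub_ne_zero.2 hst)]
    · linarith
  have h3 : (((s+t)/2)^2 : ℝ) ^ ((m-1)/2) = ((s+t)/2) ^ (m-1) := by
    rw [← Real.rpow_natCast ((s+t)/2) 2, ← Real.rpow_mul hw.le]; ring_nf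
  linarith

-- core integral lemma: strict Pm for 0 < b < a, 0 < m < 1
lemma st16_Pm_core {m a b : ℝ} (hm0 : 0 < m) (hm1 : m < 1) (hb : 0 < b) (hba : b < a) :
    m * (a - b) * ((a + b)/2) ^ (m-1) < a ^ m - b ^ m := by
  set w : ℝ := (a + b) / 2 with hw_def
  have ha : 0 < a := lt_trans hb hba
  have hw : 0 < w := by simp only [hw_def]; linarith
  have hwa : w < a := by simp only [hw_def]; linarith
  have hbw : b < w := by simp only [hw_def]; linarith
  have hi1 : IntervalIntegrable (fun t : ℝ => t ^ (m-1)) MeasureTheory.volume b w :=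
    intervalIntegral.intervalIntegrable_rpow' (by linarith)
  have hi2 : IntervalIntegrable (fun t : ℝ => t ^ (m-1)) MeasureTheory.volume w a :=
    intervalIntegral.intervalIntegrable_rpow' (by linarith)
  have hint : ∫ t in b..a, t ^ (m-1) = (a ^ m - b ^ m) / m := by
    rw [integral_rpow (Or.inl (by linarith : (-1:ℝ) < m - 1))]
    norm_num
  have hrefl : ∫ t in w..a, (a + b - t) ^ (m-1) = ∫ t in b..w, t ^ (m-1) := by
    have := intervalIntegral.integral_comp_sub_left (a := w) (b := a)
      (fun t : ℝ => t ^ (m-1)) (a + b)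
    simpa [show a + b - a = b by ring, show a + b - w = w by rw [hw_def]; ring] using this
  have hsplit : ∫ t in b..a, t ^ (m-1) =
      (∫ t in w..a, (a + b - t) ^ (m-1)) + ∫ t in w..a, t ^ (m-1) := by
    rw [hrefl]
    exact (intervalIntegral.integral_add_adjacent_intervals hi1 hi2).symm
  have hconst : ∫ _t in w..a, (2 * w ^ (m-1)) = (a - w) * (2 * w ^ (m-1)) := by
    rw [intervalIntegral.integral_const]; simp [smul_eq_mul]
  have hstrict : (∫ _t in w..a, (2 * w ^ (m-1))) <
      ∫ t in w..a, ((a + b - t) ^ (m-1) + t ^ (m-1)) := by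
    apply intervalIntegral.integral_lt_integral_of_continuousOn_of_le_of_exists_lt hwa
    · exact continuousOn_const
    · apply ContinuousOn.add
      · apply ContinuousOn.rpow_const
        · exact (continuous_const.sub continuous_id).continuousOn
        · intro t htm
          left
          have : t ≤ a := htm.2
          exact ne_of_gt (by linarith)
      · apply ContinuousOn.rpow_const continuousOn_id
        intro t htm
        left
        have : w ≤ t := htm.1
        simp only [id_eq]
        exact ne_of_gt (by linarith)
    · intro t htm
      have htw : w < t := htm.1
      have hta : t ≤ a := htm.2
      have hs : 0 < a + b - t := by linarith
      have h := st16_mid_le (m := m) hm1.le hs (by linarith : (0:ℝ) < t)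
      have hsum : ((a + b - t) + t) / 2 = w := by rw [hw_def]; ring
      rw [hsum] at h
      linarith
    · refine ⟨a, ⟨hwa.le, le_refl a⟩, ?_⟩
      have h := st16_mid_lt (m := m) hm1 (show (0:ℝ) < a + b - a by linarith)
        (by linarith : (0:ℝ) < a) (by intro h; rw [show a + b - a = b by ring] at h; linarith)
      have hsum : ((a + b - a) + a) / 2 = w := by rw [hw_def]; ring
      rw [hsum] at h
      linarith
  have hmono : (a - w) * (2 * w ^ (m-1)) < (a ^ m - b ^ m) / m := by
    have hiadd : (∫ t in w..a, ((a + b - t) ^ (m-1) + t ^ (m-1))) =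
        (∫ t in w..a, (a + b - t) ^ (m-1)) + ∫ t in w..a, t ^ (m-1) := by
      apply intervalIntegral.integral_add _ hi2
      have h := hi1.comp_sub_left (a + b)
      rw [show a + b - b = a by ring, show a + b - w = w by rw [hw_def]; ring] at h
      exact h.symm
    rw [hconst] at hstrict
    rw [hiadd, hrefl, intervalIntegral.integral_add_adjacent_intervals hi1 hi2, hint] at hstrict
    exact hstrict
  have : m * ((a - w) * (2 * w ^ (m-1))) < a ^ m - b ^ m := by
    have := mul_lt_mul_of_pos_left hmono hm0
    rwa [mul_div_cancel₀ _ (ne_of_gt hm0)] at this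
  calc m * (a - b) * w ^ (m-1) = m * ((a - w) * (2 * w ^ (m-1))) := by
        simp only [hw_def]; ring
    _ < a ^ m - b ^ m := this

lemma st16_Pm_lt {m a b : ℝ} (hm0 : 0 < m) (hm1 : m < 1) (hb : 0 ≤ b) (hba : b < a) :
    m * (a - b) * ((a + b)/2) ^ (m-1) < a ^ m - b ^ m := by
  rcases eq_or_lt_of_le hb with hb0 | hb0
  · subst hb0
    have ha0 : (0:ℝ) < a := hba
    rw [sub_zero, add_zero, Real.zero_rpow hm0.ne', sub_zero]
    have ham : (0:ℝ) < a ^ m := Real.rpow_pos_of_pos ha0 m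
    have h2m : (0:ℝ) < (2:ℝ) ^ (m-1) := Real.rpow_pos_of_pos two_pos _
    have e1 : a ^ m = a * a ^ (m-1) := by
      have h := Real.rpow_add ha0 1 (m-1)
      rw [Real.rpow_one] at h
      rw [← h]; congr 1; ring
    have e3 : m * a * (a/2) ^ (m-1) = m * 2 ^ (1-m) * a ^ m := by
      rw [Real.div_rpow ha0.le (by norm_num : (0:ℝ) ≤ 2), e1,
        show (1:ℝ)-m = -(m-1) by ring, Real.rpow_neg (by norm_num : (0:ℝ) ≤ 2)]
      field_simp
    rw [e3]
    calc m * 2 ^ (1-m) * a ^ m < 1 * a ^ m := by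
          exact mul_lt_mul_of_pos_right (st16_m2_lt hm0 hm1) ham
      _ = a ^ m := one_mul _
  · exact st16_Pm_core hm0 hm1 hb0 hba

lemma st16_Pm_le {m a b : ℝ} (hm0 : 0 < m) (hm1 : m ≤ 1) (hb : 0 ≤ b) (hba : b ≤ a) :
    m * (a - b) * ((a + b)/2) ^ (m-1) ≤ a ^ m - b ^ m := by
  rcases eq_or_lt_of_le hba with hab | hab
  · subst hab; simp
  rcases eq_or_lt_of_le hm1 with hm | hm
  · subst hm; norm_num
  · exact (st16_Pm_lt hm0 hm hb hab).le

-- Step 1 : same sign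
lemma st16_step1_le {c u v : ℝ} (hc : 1 ≤ c) (hv : 0 ≤ v) (hvu : v ≤ u) :
    u ^ c - v ^ c ≤ c * (u - v) * ((u ^ c + v ^ c)/2) ^ (1 - 1/c) := by
  have hc0 : 0 < c := by linarith
  have hu : 0 ≤ u := le_trans hv hvu
  rcases eq_or_lt_of_le hu with hu0 | hu0
  · have hv0 : v = 0 := le_antisymm (hvu.trans hu0.symm.le) hv
    rw [← hu0, hv0]
    simp
  have hm0 : 0 < 1/c := by positivity
  have hm1 : 1/c ≤ 1 := by rw [div_le_one hc0]; linarith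
  have hb : 0 ≤ v ^ c := Real.rpow_nonneg hv c
  have hba : v ^ c ≤ u ^ c := Real.rpow_le_rpow hv hvu hc0.le
  have hP := st16_Pm_le hm0 hm1 hb hba
  have ea : (u ^ c) ^ (1/c) = u := by
    rw [← Real.rpow_mul hu, mul_one_div, div_self hc0.ne', Real.rpow_one]
  have eb : (v ^ c) ^ (1/c) = v := by
    rw [← Real.rpow_mul hv, mul_one_div, div_self hc0.ne', Real.rpow_one]
  rw [ea, eb] at hP
  set M : ℝ := (u ^ c + v ^ c) / 2 with hM_def
  have hM : 0 < M := by
    have : 0 < u ^ c := Real.rpow_pos_of_pos hu0 c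
    rw [hM_def]; linarith
  have hMe : 0 < M ^ (1 - 1/c) := Real.rpow_pos_of_pos hM _
  have hMme : 0 < M ^ (1/c - 1) := Real.rpow_pos_of_pos hM _
  -- multiply hP by c * M^(1-1/c)
  have h2 := mul_le_mul_of_nonneg_left hP (by positivity : (0:ℝ) ≤ c * M ^ (1 - 1/c))
  have e4 : c * M ^ (1 - 1/c) * (1/c * (u ^ c - v ^ c) * M ^ (1/c - 1)) = u ^ c - v ^ c := by
    have eM : M ^ (1 - 1/c) * M ^ (1/c - 1) = 1 := by
      rw [← Real.rpow_add hM]; norm_num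
    have e5 : c * M ^ (1 - 1/c) * (1/c * (u ^ c - v ^ c) * M ^ (1/c - 1)) =
        (c * (1/c)) * (M ^ (1 - 1/c) * M ^ (1/c - 1)) * (u ^ c - v ^ c) := by ring
    rw [e5, eM, mul_one, mul_one_div, div_self hc0.ne', one_mul]
  calc u ^ c - v ^ c = c * M ^ (1 - 1/c) * (1/c * (u ^ c - v ^ c) * M ^ (1/c - 1)) := e4.symm
    _ ≤ c * M ^ (1 - 1/c) * (u - v) := h2
    _ = c * (u - v) * M ^ (1 - 1/c) := by ring

lemma st16_step1_lt {c u v : ℝ} (hc : 1 < c) (hv : 0 ≤ v) (hvu : v < u) :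
    u ^ c - v ^ c < c * (u - v) * ((u ^ c + v ^ c)/2) ^ (1 - 1/c) := by
  have hc0 : 0 < c := by linarith
  have hu0 : 0 < u := lt_of_le_of_lt hv hvu
  have hm0 : 0 < 1/c := by positivity
  have hm1 : 1/c < 1 := by rw [div_lt_one hc0]; linarith
  have hb : 0 ≤ v ^ c := Real.rpow_nonneg hv c
  have hba : v ^ c < u ^ c := Real.rpow_lt_rpow hv hvu hc0
  have hP := st16_Pm_lt hm0 hm1 hb hba
  have ea : (u ^ c) ^ (1/c) = u := by
    rw [← Real.rpow_mul hu0.le, mul_one_div, div_self hc0.ne', Real.rpow_one]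
  have eb : (v ^ c) ^ (1/c) = v := by
    rw [← Real.rpow_mul hv, mul_one_div, div_self hc0.ne', Real.rpow_one]
  rw [ea, eb] at hP
  set M : ℝ := (u ^ c + v ^ c) / 2 with hM_def
  have hM : 0 < M := by
    have : 0 < u ^ c := Real.rpow_pos_of_pos hu0 c
    rw [hM_def]; linarith
  have h2 := mul_lt_mul_of_pos_left hP (by positivity : (0:ℝ) < c * M ^ (1 - 1/c))
  have e4 : c * M ^ (1 - 1/c) * (1/c * (u ^ c - v ^ c) * M ^ (1/c - 1)) = u ^ c - v ^ c := by
    have eM : M ^ (1 - 1/c) * M ^ (1/c - 1) = 1 := by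
      rw [← Real.rpow_add hM]; norm_num
    have e5 : c * M ^ (1 - 1/c) * (1/c * (u ^ c - v ^ c) * M ^ (1/c - 1)) =
        (c * (1/c)) * (M ^ (1 - 1/c) * M ^ (1/c - 1)) * (u ^ c - v ^ c) := by ring
    rw [e5, eM, mul_one, mul_one_div, div_self hc0.ne', one_mul]
  calc u ^ c - v ^ c = c * M ^ (1 - 1/c) * (1/c * (u ^ c - v ^ c) * M ^ (1/c - 1)) := e4.symm
    _ < c * M ^ (1 - 1/c) * (u - v) := h2
    _ = c * (u - v) * M ^ (1 - 1/c) := by ring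

-- helper: u^c + w^c ≤ (u+w)^c
lemma st16_add_rpow {c u w : ℝ} (hc : 1 ≤ c) (hu : 0 ≤ u) (hw : 0 ≤ w) :
    u ^ c + w ^ c ≤ (u + w) ^ c := by
  have hc0 : 0 < c := by linarith
  rcases eq_or_lt_of_le (by linarith : (0:ℝ) ≤ u + w) with hs | hs
  · have hu0 : u = 0 := by linarith
    have hw0 : w = 0 := by linarith
    rw [hu0, hw0, Real.zero_rpow hc0.ne']
    simpa using Real.rpow_nonneg (le_refl (0:ℝ)) c
  have key : ∀ t : ℝ, 0 ≤ t → t ≤ u + w → t ^ c ≤ t * (u + w) ^ (c - 1) := by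
    intro t ht hts
    rcases eq_or_lt_of_le ht with ht0 | ht0
    · rw [← ht0, Real.zero_rpow hc0.ne']; norm_num
    have e1 : t ^ c = t * t ^ (c-1) := by
      have h := Real.rpow_add ht0 1 (c-1)
      rw [Real.rpow_one] at h
      rw [← h]; congr 1; ring
    rw [e1]
    exact mul_le_mul_of_nonneg_left (Real.rpow_le_rpow ht hts (by linarith)) ht
  have h1 := key u hu (by linarith)
  have h2 := key w hw (by linarith)
  have e2 : (u + w) ^ c = (u + w) * (u + w) ^ (c-1) := by
    have h := Real.rpow_add hs 1 (c-1)
    rw [Real.rpow_one] at h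
    rw [← h]; congr 1; ring
  rw [e2]
  nlinarith

-- Step opp : opposite signs
lemma st16_opp_le {c u w : ℝ} (hc : 1 ≤ c) (hu : 0 ≤ u) (hw : 0 ≤ w) :
    u ^ c + w ^ c ≤ c * (u + w) * ((u ^ c + w ^ c)/2) ^ (1 - 1/c) := by
  have hc0 : 0 < c := by linarith
  set S : ℝ := u ^ c + w ^ c with hS_def
  have hS0 : 0 ≤ S := by
    have := Real.rpow_nonneg hu c; have := Real.rpow_nonneg hw c
    rw [hS_def]; linarith
  rcases eq_or_lt_of_le hS0 with hS | hS
  · rw [← hS]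
    have h0 : (0:ℝ) ≤ ((0:ℝ)/2) ^ (1 - 1/c) := Real.rpow_nonneg (by norm_num) _
    exact mul_nonneg (mul_nonneg hc0.le (by linarith)) h0
  have e1 : S = S ^ (1/c) * S ^ (1 - 1/c) := by
    rw [← Real.rpow_add hS]; norm_num
  have h1 : S ^ (1/c) ≤ u + w := by
    have h := st16_add_rpow hc hu hw
    calc S ^ (1/c) ≤ ((u + w) ^ c) ^ (1/c) :=
          Real.rpow_le_rpow hS0 h (by positivity)
      _ = u + w := by
          rw [← Real.rpow_mul (by linarith), mul_one_div, div_self hc0.ne', Real.rpow_one]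
  have h2 : (1:ℝ) ≤ c * 2 ^ (1/c - 1) := by
    have h3 := st16_c2_le hc
    have h4 : (0:ℝ) < (2:ℝ) ^ (1 - 1/c) := Real.rpow_pos_of_pos two_pos _
    have e2 : (2:ℝ) ^ (1/c - 1) * 2 ^ (1 - 1/c) = 1 := by
      rw [← Real.rpow_add two_pos]; norm_num
    calc (1:ℝ) = 2 ^ (1/c - 1) * 2 ^ (1 - 1/c) := e2.symm
      _ ≤ 2 ^ (1/c - 1) * c := by
          exact mul_le_mul_of_nonneg_left h3 (by positivity)
      _ = c * 2 ^ (1/c - 1) := by ring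
  have hSe : (0:ℝ) ≤ S ^ (1 - 1/c) := Real.rpow_nonneg hS0 _
  have eS2 : (S/2) ^ (1 - 1/c) = S ^ (1 - 1/c) * 2 ^ (1/c - 1) := by
    rw [Real.div_rpow hS0 (by norm_num : (0:ℝ) ≤ 2),
      show (1:ℝ)/c - 1 = -(1 - 1/c) by ring, Real.rpow_neg (by norm_num : (0:ℝ) ≤ 2)]
    field_simp
  calc S = S ^ (1/c) * S ^ (1 - 1/c) := e1
    _ ≤ (u + w) * S ^ (1 - 1/c) := mul_le_mul_of_nonneg_right h1 hSe
    _ ≤ (c * 2 ^ (1/c - 1)) * ((u + w) * S ^ (1 - 1/c)) := by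
        nlinarith [mul_nonneg (by linarith : (0:ℝ) ≤ u + w) hSe]
    _ = c * (u + w) * ((S/2) ^ (1 - 1/c)) := by rw [eS2]; ring

lemma st16_opp_lt {c u w : ℝ} (hc : 1 < c) (hu : 0 ≤ u) (hw : 0 ≤ w) (hs : 0 < u + w) :
    u ^ c + w ^ c < c * (u + w) * ((u ^ c + w ^ c)/2) ^ (1 - 1/c) := by
  have hc0 : 0 < c := by linarith
  set S : ℝ := u ^ c + w ^ c with hS_def
  have hS : 0 < S := by
    rcases (by rcases lt_or_ge 0 u with h|h; exacts [Or.inl h, Or.inr (by linarith)] :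
        0 < u ∨ 0 < w) with h | h
    · have := Real.rpow_pos_of_pos h c
      have := Real.rpow_nonneg hw c
      rw [hS_def]; linarith
    · have := Real.rpow_pos_of_pos h c
      have := Real.rpow_nonneg hu c
      rw [hS_def]; linarith
  have e1 : S = S ^ (1/c) * S ^ (1 - 1/c) := by
    rw [← Real.rpow_add hS]; norm_num
  have h1 : S ^ (1/c) ≤ u + w := by
    have h := st16_add_rpow hc.le hu hw
    calc S ^ (1/c) ≤ ((u + w) ^ c) ^ (1/c) :=
          Real.rpow_le_rpow hS.le h (by positivity)
      _ = u + w := by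
          rw [← Real.rpow_mul hs.le, mul_one_div, div_self hc0.ne', Real.rpow_one]
  have h2 : (1:ℝ) < c * 2 ^ (1/c - 1) := by
    have h3 := st16_c2_lt hc
    have e2 : (2:ℝ) ^ (1/c - 1) * 2 ^ (1 - 1/c) = 1 := by
      rw [← Real.rpow_add two_pos]; norm_num
    calc (1:ℝ) = 2 ^ (1/c - 1) * 2 ^ (1 - 1/c) := e2.symm
      _ < 2 ^ (1/c - 1) * c := by
          exact mul_lt_mul_of_pos_left h3 (by positivity)
      _ = c * 2 ^ (1/c - 1) := by ring
  have hSe : (0:ℝ) < S ^ (1 - 1/c) := Real.rpow_pos_of_pos hS _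
  have eS2 : (S/2) ^ (1 - 1/c) = S ^ (1 - 1/c) * 2 ^ (1/c - 1) := by
    rw [Real.div_rpow hS.le (by norm_num : (0:ℝ) ≤ 2),
      show (1:ℝ)/c - 1 = -(1 - 1/c) by ring, Real.rpow_neg (by norm_num : (0:ℝ) ≤ 2)]
    field_simp
  calc S = S ^ (1/c) * S ^ (1 - 1/c) := e1
    _ ≤ (u + w) * S ^ (1 - 1/c) := mul_le_mul_of_nonneg_right h1 hSe.le
    _ < (c * 2 ^ (1/c - 1)) * ((u + w) * S ^ (1 - 1/c)) := by
        nlinarith [mul_pos hs hSe]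
    _ = c * (u + w) * ((S/2) ^ (1 - 1/c)) := by rw [eS2]; ring

-- phi helpers
lemma st16_phi_nonneg {c t : ℝ} (hc : c ≠ 0) (ht : 0 ≤ t) :
    |t| ^ c * Real.sign t = t ^ c := by
  rcases eq_or_lt_of_le ht with h0 | h0
  · rw [← h0]; simp [Real.sign_zero, Real.zero_rpow hc]
  · rw [abs_of_pos h0, Real.sign_of_pos h0, mul_one]

lemma st16_phi_neg (c t : ℝ) :
    |(-t)| ^ c * Real.sign (-t) = -(|t| ^ c * Real.sign t) := by
  rw [abs_neg, Real.sign_neg]; ring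

lemma st16_abs_phi {c : ℝ} (hc : c ≠ 0) (t : ℝ) :
    |(|t| ^ c * Real.sign t)| = |t| ^ c := by
  rcases lt_trichotomy t 0 with h | h | h
  · rw [Real.sign_of_neg h, mul_neg_one, abs_neg]
    exact abs_of_nonneg (Real.rpow_nonneg (abs_nonneg t) c)
  · subst h; simp [Real.sign_zero, Real.zero_rpow hc]
  · rw [Real.sign_of_pos h, mul_one]
    exact abs_of_nonneg (Real.rpow_nonneg (abs_nonneg t) c)

-- master pointwise inequality, base exponent c
lemma st16_master_le {c : ℝ} (hc : 1 ≤ c) (u v : ℝ) :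
    |(|u| ^ c * Real.sign u) - (|v| ^ c * Real.sign v)| ≤
      c * |u - v| * ((|u| ^ c + |v| ^ c)/2) ^ (1 - 1/c) := by
  have hc0 : 0 < c := by linarith
  have aux : ∀ a b : ℝ, 0 ≤ b → b ≤ a →
      |(|a| ^ c * Real.sign a) - (|b| ^ c * Real.sign b)| ≤
        c * |a - b| * ((|a| ^ c + |b| ^ c)/2) ^ (1 - 1/c) := by
    intro a b hb hba
    have ha : 0 ≤ a := le_trans hb hba
    rw [st16_phi_nonneg hc0.ne' ha, st16_phi_nonneg hc0.ne' hb,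
      abs_of_nonneg (sub_nonneg.2 (Real.rpow_le_rpow hb hba hc0.le)),
      abs_of_nonneg (sub_nonneg.2 hba), abs_of_nonneg ha, abs_of_nonneg hb]
    exact st16_step1_le hc hb hba
  have key : ∀ a b : ℝ, b ≤ a →
      |(|a| ^ c * Real.sign a) - (|b| ^ c * Real.sign b)| ≤
        c * |a - b| * ((|a| ^ c + |b| ^ c)/2) ^ (1 - 1/c) := by
    intro a b hba
    rcases le_or_gt 0 b with hb | hb
    · exact aux a b hb hba
    rcases le_or_gt a 0 with ha | ha
    · have h := aux (-b) (-a) (by linarith) (by linarith)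
      rw [st16_phi_neg, st16_phi_neg, abs_neg, abs_neg] at h
      calc |(|a| ^ c * Real.sign a) - (|b| ^ c * Real.sign b)|
          = |(-(|b| ^ c * Real.sign b)) - (-(|a| ^ c * Real.sign a))| := by
            rw [abs_sub_comm,
              show -(|b| ^ c * Real.sign b) - -(|a| ^ c * Real.sign a) =
                -((|b| ^ c * Real.sign b) - (|a| ^ c * Real.sign a)) by ring, abs_neg]
        _ ≤ c * |(-b) - (-a)| * ((|b| ^ c + |a| ^ c)/2) ^ (1 - 1/c) := h
        _ = c * |a - b| * ((|a| ^ c + |b| ^ c)/2) ^ (1 - 1/c) := by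
            rw [show (-b) - (-a) = a - b by ring, add_comm (|b| ^ c)]
    · -- b < 0 < a
      have habs : |a| = a := abs_of_pos ha
      have hbabs : |b| = -b := abs_of_neg hb
      have h := st16_opp_le hc (le_of_lt ha) (by linarith : (0:ℝ) ≤ -b)
      rw [Real.sign_of_pos ha, Real.sign_of_neg hb, habs, hbabs]
      have e1 : a ^ c * 1 - (-b) ^ c * (-1) = a ^ c + (-b) ^ c := by ring
      rw [e1, abs_of_nonneg (add_nonneg (Real.rpow_nonneg ha.le c)
        (Real.rpow_nonneg (by linarith : (0:ℝ) ≤ -b) c)),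
        abs_of_pos (by linarith : 0 < a - b), show a - b = a + -b by ring]
      exact h
  rcases le_total v u with h | h
  · exact key u v h
  · have h2 := key v u h
    rw [abs_sub_comm, abs_sub_comm v u, add_comm (|v| ^ c)] at h2
    exact h2

lemma st16_master_lt {c : ℝ} (hc : 1 < c) {u v : ℝ} (huv : u ≠ v) :
    |(|u| ^ c * Real.sign u) - (|v| ^ c * Real.sign v)| <
      c * |u - v| * ((|u| ^ c + |v| ^ c)/2) ^ (1 - 1/c) := by
  have hc0 : 0 < c := by linarith
  have aux : ∀ a b : ℝ, 0 ≤ b → b < a →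
      |(|a| ^ c * Real.sign a) - (|b| ^ c * Real.sign b)| <
        c * |a - b| * ((|a| ^ c + |b| ^ c)/2) ^ (1 - 1/c) := by
    intro a b hb hba
    have ha : 0 ≤ a := le_trans hb hba.le
    rw [st16_phi_nonneg hc0.ne' ha, st16_phi_nonneg hc0.ne' hb,
      abs_of_nonneg (sub_nonneg.2 (Real.rpow_le_rpow hb hba.le hc0.le)),
      abs_of_nonneg (sub_nonneg.2 hba.le), abs_of_nonneg ha, abs_of_nonneg hb]
    exact st16_step1_lt hc hb hba
  have key : ∀ a b : ℝ, b < a →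
      |(|a| ^ c * Real.sign a) - (|b| ^ c * Real.sign b)| <
        c * |a - b| * ((|a| ^ c + |b| ^ c)/2) ^ (1 - 1/c) := by
    intro a b hba
    rcases le_or_gt 0 b with hb | hb
    · exact aux a b hb hba
    rcases le_or_gt a 0 with ha | ha
    · have h := aux (-b) (-a) (by linarith) (by linarith)
      rw [st16_phi_neg, st16_phi_neg, abs_neg, abs_neg] at h
      calc |(|a| ^ c * Real.sign a) - (|b| ^ c * Real.sign b)|
          = |(-(|b| ^ c * Real.sign b)) - (-(|a| ^ c * Real.sign a))| := by
            rw [abs_sub_comm,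
              show -(|b| ^ c * Real.sign b) - -(|a| ^ c * Real.sign a) =
                -((|b| ^ c * Real.sign b) - (|a| ^ c * Real.sign a)) by ring, abs_neg]
        _ < c * |(-b) - (-a)| * ((|b| ^ c + |a| ^ c)/2) ^ (1 - 1/c) := h
        _ = c * |a - b| * ((|a| ^ c + |b| ^ c)/2) ^ (1 - 1/c) := by
            rw [show (-b) - (-a) = a - b by ring, add_comm (|b| ^ c)]
    · have habs : |a| = a := abs_of_pos ha
      have hbabs : |b| = -b := abs_of_neg hb
      have h := st16_opp_lt hc (le_of_lt ha) (by linarith : (0:ℝ) ≤ -b)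
        (by linarith : 0 < a + -b)
      rw [Real.sign_of_pos ha, Real.sign_of_neg hb, habs, hbabs]
      have e1 : a ^ c * 1 - (-b) ^ c * (-1) = a ^ c + (-b) ^ c := by ring
      rw [e1, abs_of_nonneg (add_nonneg (Real.rpow_nonneg ha.le c)
        (Real.rpow_nonneg (by linarith : (0:ℝ) ≤ -b) c)),
        abs_of_pos (by linarith : 0 < a - b), show a - b = a + -b by ring]
      exact h
  rcases lt_or_gt_of_ne huv with h | h
  · have h2 := key v u h
    rw [abs_sub_comm, abs_sub_comm v u, add_comm (|v| ^ c)] at h2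
    exact h2
  · exact key u v h

-- power-mean lift
lemma st16_lift {c q : ℝ} (hc : 1 ≤ c) (hcq : c ≤ q) {A B : ℝ} (hA : 0 ≤ A) (hB : 0 ≤ B) :
    ((A ^ c + B ^ c)/2) ^ (1 - 1/c) ≤ ((A ^ q + B ^ q)/2) ^ ((c - 1)/q) := by
  have hc0 : 0 < c := by linarith
  have hq0 : 0 < q := by linarith
  have hr : 1 ≤ q / c := (one_le_div hc0).2 hcq
  have hM : (0:ℝ) ≤ (A ^ c + B ^ c)/2 := by positivity
  have hK : (0:ℝ) ≤ (A ^ q + B ^ q)/2 := by positivity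
  have hcon := (convexOn_rpow hr).2 (Set.mem_Ici.2 (Real.rpow_nonneg hA c))
    (Set.mem_Ici.2 (Real.rpow_nonneg hB c)) (by norm_num : (0:ℝ) ≤ 1/2)
    (by norm_num : (0:ℝ) ≤ 1/2) (by norm_num)
  simp only [smul_eq_mul] at hcon
  have eA : (A ^ c) ^ (q/c) = A ^ q := by
    rw [← Real.rpow_mul hA]; congr 1; field_simp
  have eB : (B ^ c) ^ (q/c) = B ^ q := by
    rw [← Real.rpow_mul hB]; congr 1; field_simp
  rw [eA, eB] at hcon
  have hMr : ((A ^ c + B ^ c)/2) ^ (q/c) ≤ (A ^ q + B ^ q)/2 := by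
    have e : (1/2 : ℝ) * A ^ c + (1/2) * B ^ c = (A ^ c + B ^ c)/2 := by ring
    rw [e] at hcon
    linarith
  have eL : ((A ^ c + B ^ c)/2) ^ (1 - 1/c) =
      (((A ^ c + B ^ c)/2) ^ (q/c)) ^ ((c - 1)/q) := by
    rw [← Real.rpow_mul hM]; congr 1; field_simp
  rw [eL]
  exact Real.rpow_le_rpow (Real.rpow_nonneg hM _) hMr (div_nonneg (by linarith) hq0.le)

-- final pointwise inequality in summation-ready form
lemma st16_ptw_le {p q : ℝ} (hp : 1 ≤ p) (hpq : p ≤ q) (u v : ℝ) :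
    |(|u| ^ (q/p) * Real.sign u) - (|v| ^ (q/p) * Real.sign v)| ^ p ≤
      (q/p) ^ p * 2 ^ (p/q - 1) *
        ((|u - v| ^ q) ^ (p/q) * (|u| ^ q + |v| ^ q) ^ (1 - p/q)) := by
  have hp0 : 0 < p := by linarith
  have hq0 : 0 < q := by linarith
  set c : ℝ := q / p with hc_def
  have hc : 1 ≤ c := (one_le_div hp0).2 hpq
  have hcq : c ≤ q := by
    rw [hc_def, div_le_iff₀ hp0]
    nlinarith
  have hb : (0:ℝ) ≤ |u| ^ q + |v| ^ q :=
    add_nonneg (Real.rpow_nonneg (abs_nonneg u) q) (Real.rpow_nonneg (abs_nonneg v) q)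
  have hMq : (0:ℝ) ≤ (|u| ^ q + |v| ^ q)/2 := by linarith
  have h1 := st16_master_le hc u v
  have h2 := st16_lift hc hcq (abs_nonneg u) (abs_nonneg v)
  have hchain : |(|u| ^ c * Real.sign u) - (|v| ^ c * Real.sign v)| ≤
      c * |u - v| * (((|u| ^ q + |v| ^ q)/2) ^ ((c - 1)/q)) :=
    h1.trans (mul_le_mul_of_nonneg_left h2 (by positivity))
  have hpow := Real.rpow_le_rpow (abs_nonneg _) hchain hp0.le
  refine hpow.trans (le_of_eq ?_)
  rw [Real.mul_rpow (by positivity) (Real.rpow_nonneg hMq _),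
    Real.mul_rpow (by positivity : (0:ℝ) ≤ c) (abs_nonneg _)]
  have e1 : (((|u| ^ q + |v| ^ q)/2) ^ ((c - 1)/q)) ^ p =
      ((|u| ^ q + |v| ^ q)/2) ^ (1 - p/q) := by
    rw [← Real.rpow_mul hMq]; congr 1
    rw [hc_def]; field_simp
  have e2 : ((|u| ^ q + |v| ^ q)/2) ^ (1 - p/q) =
      (|u| ^ q + |v| ^ q) ^ (1 - p/q) * 2 ^ (p/q - 1) := by
    rw [Real.div_rpow hb (by norm_num : (0:ℝ) ≤ 2),
      show p/q - 1 = -(1 - p/q) by ring, Real.rpow_neg (by norm_num : (0:ℝ) ≤ 2)]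
    rw [div_eq_mul_inv]
  have e3 : |u - v| ^ p = (|u - v| ^ q) ^ (p/q) := by
    rw [← Real.rpow_mul (abs_nonneg _)]; congr 1; field_simp
  rw [e1, e2, e3]; ring

lemma st16_ptw_lt {p q : ℝ} (hp : 1 ≤ p) (hpq : p < q) {u v : ℝ} (huv : u ≠ v) :
    |(|u| ^ (q/p) * Real.sign u) - (|v| ^ (q/p) * Real.sign v)| ^ p <
      (q/p) ^ p * 2 ^ (p/q - 1) *
        ((|u - v| ^ q) ^ (p/q) * (|u| ^ q + |v| ^ q) ^ (1 - p/q)) := by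
  have hp0 : 0 < p := by linarith
  have hq0 : 0 < q := by linarith
  set c : ℝ := q / p with hc_def
  have hc : 1 < c := (one_lt_div hp0).2 hpq
  have hcq : c ≤ q := by
    rw [hc_def, div_le_iff₀ hp0]
    nlinarith
  have hb : (0:ℝ) ≤ |u| ^ q + |v| ^ q :=
    add_nonneg (Real.rpow_nonneg (abs_nonneg u) q) (Real.rpow_nonneg (abs_nonneg v) q)
  have hMq : (0:ℝ) ≤ (|u| ^ q + |v| ^ q)/2 := by linarith
  have h1 := st16_master_lt hc huv
  have h2 := st16_lift hc.le hcq (abs_nonneg u) (abs_nonneg v)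
  have habs : 0 < |u - v| := abs_pos.2 (sub_ne_zero.2 huv)
  have hchain : |(|u| ^ c * Real.sign u) - (|v| ^ c * Real.sign v)| <
      c * |u - v| * (((|u| ^ q + |v| ^ q)/2) ^ ((c - 1)/q)) :=
    lt_of_lt_of_le h1 (mul_le_mul_of_nonneg_left h2 (by positivity))
  have hpow := Real.rpow_lt_rpow (abs_nonneg _) hchain hp0
  refine hpow.trans_le (le_of_eq ?_)
  rw [Real.mul_rpow (by positivity) (Real.rpow_nonneg hMq _),
    Real.mul_rpow (by positivity : (0:ℝ) ≤ c) (abs_nonneg _)]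
  have e1 : (((|u| ^ q + |v| ^ q)/2) ^ ((c - 1)/q)) ^ p =
      ((|u| ^ q + |v| ^ q)/2) ^ (1 - p/q) := by
    rw [← Real.rpow_mul hMq]; congr 1
    rw [hc_def]; field_simp
  have e2 : ((|u| ^ q + |v| ^ q)/2) ^ (1 - p/q) =
      (|u| ^ q + |v| ^ q) ^ (1 - p/q) * 2 ^ (p/q - 1) := by
    rw [Real.div_rpow hb (by norm_num : (0:ℝ) ≤ 2),
      show p/q - 1 = -(1 - p/q) by ring, Real.rpow_neg (by norm_num : (0:ℝ) ≤ 2)]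
    rw [div_eq_mul_inv]
  have e3 : |u - v| ^ p = (|u - v| ^ q) ^ (p/q) := by
    rw [← Real.rpow_mul (abs_nonneg _)]; congr 1; field_simp
  rw [e1, e2, e3]; ring

-- Hölder for sums
lemma st16_holder {ι : Type*} (s : Finset ι) (f g : ι → ℝ) {θ : ℝ}
    (hf : ∀ i ∈ s, 0 ≤ f i) (hg : ∀ i ∈ s, 0 ≤ g i) (h0 : 0 < θ) (h1 : θ ≤ 1) :
    ∑ i ∈ s, (f i) ^ θ * (g i) ^ (1 - θ) ≤
      (∑ i ∈ s, f i) ^ θ * (∑ i ∈ s, g i) ^ (1 - θ) := by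
  rcases eq_or_lt_of_le h1 with hθ1 | hθ1
  · subst hθ1
    simp only [sub_self, Real.rpow_zero, Real.rpow_one, mul_one]
    exact le_refl _
  · have hpq : Real.HolderConjugate (1/θ) (1/(1-θ)) :=
      Real.holderConjugate_one_div h0 (by linarith) (by ring)
    have h := Real.inner_le_Lp_mul_Lq_of_nonneg s hpq
      (f := fun i => (f i) ^ θ) (g := fun i => (g i) ^ (1 - θ))
      (fun i hi => Real.rpow_nonneg (hf i hi) _)
      (fun i hi => Real.rpow_nonneg (hg i hi) _)
    have e1 : ∀ i ∈ s, ((f i) ^ θ) ^ (1/θ) = f i := by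
      intro i hi
      rw [← Real.rpow_mul (hf i hi), mul_one_div, div_self h0.ne', Real.rpow_one]
    have e2 : ∀ i ∈ s, ((g i) ^ (1 - θ)) ^ (1/(1-θ)) = g i := by
      intro i hi
      rw [← Real.rpow_mul (hg i hi), mul_one_div, div_self (by linarith : 1 - θ ≠ 0),
        Real.rpow_one]
    rw [Finset.sum_congr rfl e1, Finset.sum_congr rfl e2] at h
    rw [show (1:ℝ)/(1/θ) = θ by rw [one_div_one_div],
      show (1:ℝ)/(1/(1-θ)) = 1 - θ by rw [one_div_one_div]] at h
    exact h

-- key summed inequality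
lemma st16_key_le {ι : Type*} (s : Finset ι) (U V : ι → ℝ) {p q : ℝ}
    (hp : 1 ≤ p) (hpq : p ≤ q) :
    ∑ e ∈ s, |(|U e| ^ (q/p) * Real.sign (U e)) - (|V e| ^ (q/p) * Real.sign (V e))| ^ p ≤
      (q/p) ^ p * 2 ^ (p/q - 1) * ((∑ e ∈ s, |U e - V e| ^ q) ^ (p/q) *
        (∑ e ∈ s, (|U e| ^ q + |V e| ^ q)) ^ (1 - p/q)) := by
  have hp0 : 0 < p := by linarith
  have hq0 : 0 < q := by linarith
  have hθ0 : 0 < p/q := by positivity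
  have hθ1 : p/q ≤ 1 := by rw [div_le_one hq0]; linarith
  have hC : (0:ℝ) ≤ (q/p) ^ p * 2 ^ (p/q - 1) := by positivity
  calc ∑ e ∈ s, |(|U e| ^ (q/p) * Real.sign (U e)) - (|V e| ^ (q/p) * Real.sign (V e))| ^ p
      ≤ ∑ e ∈ s, (q/p) ^ p * 2 ^ (p/q - 1) *
          ((|U e - V e| ^ q) ^ (p/q) * (|U e| ^ q + |V e| ^ q) ^ (1 - p/q)) :=
        Finset.sum_le_sum fun e _ => st16_ptw_le hp hpq (U e) (V e)
    _ = (q/p) ^ p * 2 ^ (p/q - 1) *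
          ∑ e ∈ s, (|U e - V e| ^ q) ^ (p/q) * (|U e| ^ q + |V e| ^ q) ^ (1 - p/q) := by
        rw [Finset.mul_sum]
    _ ≤ (q/p) ^ p * 2 ^ (p/q - 1) * ((∑ e ∈ s, |U e - V e| ^ q) ^ (p/q) *
          (∑ e ∈ s, (|U e| ^ q + |V e| ^ q)) ^ (1 - p/q)) := by
        refine mul_le_mul_of_nonneg_left ?_ hC
        exact st16_holder s _ _
          (fun e _ => Real.rpow_nonneg (abs_nonneg _) q)
          (fun e _ => add_nonneg (Real.rpow_nonneg (abs_nonneg _) q)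
            (Real.rpow_nonneg (abs_nonneg _) q)) hθ0 hθ1

lemma st16_key_lt {ι : Type*} (s : Finset ι) (U V : ι → ℝ) {p q : ℝ}
    (hp : 1 ≤ p) (hpq : p < q) {e0 : ι} (he0 : e0 ∈ s) (hUV : U e0 ≠ V e0) :
    ∑ e ∈ s, |(|U e| ^ (q/p) * Real.sign (U e)) - (|V e| ^ (q/p) * Real.sign (V e))| ^ p <
      (q/p) ^ p * 2 ^ (p/q - 1) * ((∑ e ∈ s, |U e - V e| ^ q) ^ (p/q) *
        (∑ e ∈ s, (|U e| ^ q + |V e| ^ q)) ^ (1 - p/q)) := by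
  have hp0 : 0 < p := by linarith
  have hq0 : 0 < q := by linarith
  have hθ0 : 0 < p/q := by positivity
  have hθ1 : p/q ≤ 1 := by rw [div_le_one hq0]; linarith
  have hC : (0:ℝ) ≤ (q/p) ^ p * 2 ^ (p/q - 1) := by positivity
  calc ∑ e ∈ s, |(|U e| ^ (q/p) * Real.sign (U e)) - (|V e| ^ (q/p) * Real.sign (V e))| ^ p
      < ∑ e ∈ s, (q/p) ^ p * 2 ^ (p/q - 1) *
          ((|U e - V e| ^ q) ^ (p/q) * (|U e| ^ q + |V e| ^ q) ^ (1 - p/q)) :=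
        Finset.sum_lt_sum (fun e _ => (st16_ptw_le hp hpq.le (U e) (V e)))
          ⟨e0, he0, st16_ptw_lt hp hpq hUV⟩
    _ = (q/p) ^ p * 2 ^ (p/q - 1) *
          ∑ e ∈ s, (|U e - V e| ^ q) ^ (p/q) * (|U e| ^ q + |V e| ^ q) ^ (1 - p/q) := by
        rw [Finset.mul_sum]
    _ ≤ (q/p) ^ p * 2 ^ (p/q - 1) * ((∑ e ∈ s, |U e - V e| ^ q) ^ (p/q) *
          (∑ e ∈ s, (|U e| ^ q + |V e| ^ q)) ^ (1 - p/q)) := by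
        refine mul_le_mul_of_nonneg_left ?_ hC
        exact st16_holder s _ _
          (fun e _ => Real.rpow_nonneg (abs_nonneg _) q)
          (fun e _ => add_nonneg (Real.rpow_nonneg (abs_nonneg _) q)
            (Real.rpow_nonneg (abs_nonneg _) q)) hθ0 hθ1

-- final arithmetic packaging
lemma st16_two_pow_split {θ : ℝ} : (2:ℝ) ^ θ = 2 * 2 ^ (θ - 1) := by
  have h := Real.rpow_add two_pos 1 (θ - 1)
  rw [Real.rpow_one] at h
  rw [← h]; congr 1; ring

lemma st16_final_le {S T N p q : ℝ} (hp : 1 ≤ p) (hpq : p ≤ q) (hS0 : 0 ≤ S) (hT0 : 0 ≤ T)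
    (hN : 0 < N)
    (key : 2*S ≤ (q/p) ^ p * 2 ^ (p/q - 1) * ((2*T) ^ (p/q) * (2*N) ^ (1 - p/q))) :
    (p * (2 * (S/N)) ^ (1/p) ≤ q * (2 * (T/N)) ^ (1/q)) ∧
    (S/N ≤ 2 ^ (p/q - 1) * (q/p) ^ p * (T/N) ^ (p/q)) := by
  have hp0 : 0 < p := by linarith
  have hq0 : 0 < q := by linarith
  have hNθ : (0:ℝ) < N ^ (p/q) := Real.rpow_pos_of_pos hN _
  have e20 : (2*T) ^ (p/q) = 2 ^ (p/q) * T ^ (p/q) := Real.mul_rpow (by norm_num) hT0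
  have e21 : (2*N) ^ (1 - p/q) = 2 ^ (1 - p/q) * N ^ (1 - p/q) :=
    Real.mul_rpow (by norm_num) hN.le
  have e24 : (2:ℝ) ^ (p/q - 1) * 2 ^ (1 - p/q) = 1 := by
    rw [← Real.rpow_add two_pos]; norm_num
  have hSle : S ≤ 2 ^ (p/q - 1) * (q/p) ^ p * (T ^ (p/q) * N ^ (1 - p/q)) := by
    have e25 : (q/p) ^ p * 2 ^ (p/q - 1) * ((2 ^ (p/q) * T ^ (p/q)) *
        (2 ^ (1 - p/q) * N ^ (1 - p/q))) =
        ((2:ℝ) ^ (p/q - 1) * 2 ^ (1 - p/q)) * ((2:ℝ) ^ (p/q)) * ((q/p) ^ p *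
          (T ^ (p/q) * N ^ (1 - p/q))) := by ring
    rw [e20, e21, e25, e24, one_mul, st16_two_pow_split] at key
    linarith
  have eN : N ^ (1 - p/q) * N ^ (p/q) = N := by
    rw [← Real.rpow_add hN]; norm_num
  have eN2 : N ^ (1 - p/q) = N / N ^ (p/q) := by
    rw [eq_div_iff hNθ.ne']; exact eN
  have e_target : (2 ^ (p/q - 1) * (q/p) ^ p * (T ^ (p/q) * N ^ (1 - p/q)))/N =
      2 ^ (p/q - 1) * (q/p) ^ p * (T/N) ^ (p/q) := by
    rw [eN2, Real.div_rpow hT0 hN.le]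
    field_simp
  have concl2 : S/N ≤ 2 ^ (p/q - 1) * (q/p) ^ p * (T/N) ^ (p/q) := by
    rw [← e_target]
    gcongr
  refine ⟨?_, concl2⟩
  have hFq0 : (0:ℝ) ≤ T/N := div_nonneg hT0 hN.le
  have hFp0 : (0:ℝ) ≤ S/N := div_nonneg hS0 hN.le
  have eA : (2*(T/N)) ^ (p/q) = 2 ^ (p/q) * (T/N) ^ (p/q) := Real.mul_rpow (by norm_num) hFq0
  have h2F : 2*(S/N) ≤ (q/p) ^ p * (2*(T/N)) ^ (p/q) := by
    calc 2*(S/N) ≤ 2*(2 ^ (p/q - 1) * (q/p) ^ p * (T/N) ^ (p/q)) := by linarith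
      _ = (q/p) ^ p * ((2 * 2 ^ (p/q - 1)) * (T/N) ^ (p/q)) := by ring
      _ = (q/p) ^ p * (2 ^ (p/q) * (T/N) ^ (p/q)) := by rw [← st16_two_pow_split]
      _ = (q/p) ^ p * (2*(T/N)) ^ (p/q) := by rw [← eA]
  have h3 : (2*(S/N)) ^ (1/p) ≤ ((q/p) ^ p * (2*(T/N)) ^ (p/q)) ^ (1/p) :=
    Real.rpow_le_rpow (by linarith) h2F (by positivity)
  have e4 : ((q/p) ^ p * (2*(T/N)) ^ (p/q)) ^ (1/p) = (q/p) * (2*(T/N)) ^ (1/q) := by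
    rw [Real.mul_rpow (Real.rpow_nonneg (by positivity) p)
      (Real.rpow_nonneg (by positivity) (p/q)),
      ← Real.rpow_mul (by positivity : (0:ℝ) ≤ q/p),
      ← Real.rpow_mul (by positivity : (0:ℝ) ≤ 2*(T/N)),
      mul_one_div, div_self hp0.ne', Real.rpow_one,
      show p/q*(1/p) = 1/q by field_simp]
  calc p * (2*(S/N)) ^ (1/p) ≤ p * ((q/p) * (2*(T/N)) ^ (1/q)) :=
        mul_le_mul_of_nonneg_left (h3.trans_eq e4) hp0.le
    _ = q * (2*(T/N)) ^ (1/q) := by field_simp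

lemma st16_final_lt {S T N p q : ℝ} (hp : 1 ≤ p) (hpq : p ≤ q) (hS0 : 0 ≤ S) (hT0 : 0 ≤ T)
    (hN : 0 < N)
    (key : 2*S < (q/p) ^ p * 2 ^ (p/q - 1) * ((2*T) ^ (p/q) * (2*N) ^ (1 - p/q))) :
    (p * (2 * (S/N)) ^ (1/p) < q * (2 * (T/N)) ^ (1/q)) ∧
    (S/N < 2 ^ (p/q - 1) * (q/p) ^ p * (T/N) ^ (p/q)) := by
  have hp0 : 0 < p := by linarith
  have hq0 : 0 < q := by linarith
  have hNθ : (0:ℝ) < N ^ (p/q) := Real.rpow_pos_of_pos hN _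
  have e20 : (2*T) ^ (p/q) = 2 ^ (p/q) * T ^ (p/q) := Real.mul_rpow (by norm_num) hT0
  have e21 : (2*N) ^ (1 - p/q) = 2 ^ (1 - p/q) * N ^ (1 - p/q) :=
    Real.mul_rpow (by norm_num) hN.le
  have e24 : (2:ℝ) ^ (p/q - 1) * 2 ^ (1 - p/q) = 1 := by
    rw [← Real.rpow_add two_pos]; norm_num
  have hSle : S < 2 ^ (p/q - 1) * (q/p) ^ p * (T ^ (p/q) * N ^ (1 - p/q)) := by
    have e25 : (q/p) ^ p * 2 ^ (p/q - 1) * ((2 ^ (p/q) * T ^ (p/q)) *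
        (2 ^ (1 - p/q) * N ^ (1 - p/q))) =
        ((2:ℝ) ^ (p/q - 1) * 2 ^ (1 - p/q)) * ((2:ℝ) ^ (p/q)) * ((q/p) ^ p *
          (T ^ (p/q) * N ^ (1 - p/q))) := by ring
    rw [e20, e21, e25, e24, one_mul, st16_two_pow_split] at key
    linarith
  have eN : N ^ (1 - p/q) * N ^ (p/q) = N := by
    rw [← Real.rpow_add hN]; norm_num
  have eN2 : N ^ (1 - p/q) = N / N ^ (p/q) := by
    rw [eq_div_iff hNθ.ne']; exact eN
  have e_target : (2 ^ (p/q - 1) * (q/p) ^ p * (T ^ (p/q) * N ^ (1 - p/q)))/N =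
      2 ^ (p/q - 1) * (q/p) ^ p * (T/N) ^ (p/q) := by
    rw [eN2, Real.div_rpow hT0 hN.le]
    field_simp
  have concl2 : S/N < 2 ^ (p/q - 1) * (q/p) ^ p * (T/N) ^ (p/q) := by
    rw [← e_target]
    gcongr
  refine ⟨?_, concl2⟩
  have hFq0 : (0:ℝ) ≤ T/N := div_nonneg hT0 hN.le
  have hFp0 : (0:ℝ) ≤ S/N := div_nonneg hS0 hN.le
  have eA : (2*(T/N)) ^ (p/q) = 2 ^ (p/q) * (T/N) ^ (p/q) := Real.mul_rpow (by norm_num) hFq0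
  have h2F : 2*(S/N) < (q/p) ^ p * (2*(T/N)) ^ (p/q) := by
    calc 2*(S/N) < 2*(2 ^ (p/q - 1) * (q/p) ^ p * (T/N) ^ (p/q)) := by linarith
      _ = (q/p) ^ p * ((2 * 2 ^ (p/q - 1)) * (T/N) ^ (p/q)) := by ring
      _ = (q/p) ^ p * (2 ^ (p/q) * (T/N) ^ (p/q)) := by rw [← st16_two_pow_split]
      _ = (q/p) ^ p * (2*(T/N)) ^ (p/q) := by rw [← eA]
  have h3 : (2*(S/N)) ^ (1/p) < ((q/p) ^ p * (2*(T/N)) ^ (p/q)) ^ (1/p) :=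
    Real.rpow_lt_rpow (by linarith) h2F (by positivity)
  have e4 : ((q/p) ^ p * (2*(T/N)) ^ (p/q)) ^ (1/p) = (q/p) * (2*(T/N)) ^ (1/q) := by
    rw [Real.mul_rpow (Real.rpow_nonneg (by positivity) p)
      (Real.rpow_nonneg (by positivity) (p/q)),
      ← Real.rpow_mul (by positivity : (0:ℝ) ≤ q/p),
      ← Real.rpow_mul (by positivity : (0:ℝ) ≤ 2*(T/N)),
      mul_one_div, div_self hp0.ne', Real.rpow_one,
      show p/q*(1/p) = 1/q by field_simp]
  calc p * (2*(S/N)) ^ (1/p) < p * ((q/p) * (2*(T/N)) ^ (1/q)) :=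
        mul_lt_mul_of_pos_left (h3.trans_eq e4) hp0
    _ = q * (2*(T/N)) ^ (1/q) := by field_simp

lemma st16_sum_filter {n : ℕ} (G : SimpleGraph (Fin n)) [DecidableRel G.Adj]
    (f : Fin n → Fin n → ℝ) :
    ∑ e ∈ Finset.univ.filter (fun e : Fin n × Fin n => G.Adj e.1 e.2), f e.1 e.2 =
      ∑ i : Fin n, ∑ j : Fin n, if G.Adj i j then f i j else 0 := by
  rw [Finset.sum_filter, Fintype.sum_prod_type]

lemma st16_degsum {n : ℕ} (G : SimpleGraph (Fin n)) [DecidableRel G.Adj]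
    (y : ℝ) (i : Fin n) :
    (∑ j : Fin n, if G.Adj i j then y else 0) = (G.degree i : ℝ) * y := by
  have h1 : ∀ j : Fin n, (if G.Adj i j then y else 0) = (if G.Adj i j then (1:ℝ) else 0) * y := by
    intro j; split <;> simp
  rw [Finset.sum_congr rfl fun j _ => h1 j, ← Finset.sum_mul, Finset.sum_boole]
  have h2 : (Finset.univ.filter fun j => G.Adj i j).card = G.degree i := by
    rw [SimpleGraph.degree, SimpleGraph.neighborFinset_eq_filter]
  rw [h2]

lemma st16_TVp_nonneg {n : ℕ} (G : SimpleGraph (Fin n)) [DecidableRel G.Adj] (r : ℝ)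
    (y : Fin n → ℝ) : 0 ≤ TVp G r y := by
  unfold TVp
  apply div_nonneg _ (by norm_num)
  apply Finset.sum_nonneg; intro i _
  apply Finset.sum_nonneg; intro j _
  split
  · exact Real.rpow_nonneg (abs_nonneg _) r
  · exact le_refl 0


/-- **`p(2F_p(Φ_{q/p}(x)))^{1/p} ≤ q(2F_q(x))^{1/q}`, equivalently
`F_p(Φ_{q/p}(x)) ≤ 2^{p/q-1}(q/p)^p F_q(x)^{p/q}`; strict if `p < q` and `F_q(x) > 0`.** -/
theorem stmt16 {n : ℕ} (G : SimpleGraph (Fin n)) [DecidableRel G.Adj]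
    (hdeg : ∀ i, 0 < G.degree i) (p q : ℝ) (hp : 1 ≤ p) (hpq : p ≤ q)
    (x : Fin n → ℝ) (hx : x ≠ 0) :
    (p * (2 * Fp G p (Phi (q / p) x)) ^ (1 / p) ≤ q * (2 * Fp G q x) ^ (1 / q) ∧
      Fp G p (Phi (q / p) x) ≤ 2 ^ (p / q - 1) * (q / p) ^ p * Fp G q x ^ (p / q)) ∧
    (p < q → 0 < Fp G q x →
      p * (2 * Fp G p (Phi (q / p) x)) ^ (1 / p) < q * (2 * Fp G q x) ^ (1 / q) ∧
      Fp G p (Phi (q / p) x) < 2 ^ (p / q - 1) * (q / p) ^ p * Fp G q x ^ (p / q)) := by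
  classical
  have hp0 : 0 < p := by linarith
  have hq0 : 0 < q := by linarith
  have hc0 : (0:ℝ) < q/p := by positivity
  have hNp_eq : Np G p (Phi (q/p) x) = Np G q x := by
    unfold Np Phi
    refine Finset.sum_congr rfl fun i _ => ?_
    congr 1
    rw [st16_abs_phi (ne_of_gt hc0), ← Real.rpow_mul (abs_nonneg (x i)),
      div_mul_cancel₀ q hp0.ne']
  have hN : 0 < Np G q x := by
    obtain ⟨i0, hi0⟩ := Function.ne_iff.1 hx
    unfold Np
    apply Finset.sum_pos'
    · intro i _
      exact mul_nonneg (Nat.cast_nonneg _) (Real.rpow_nonneg (abs_nonneg _) _)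
    · refine ⟨i0, Finset.mem_univ _, ?_⟩
      have h1 : (0:ℝ) < (G.degree i0 : ℝ) := by exact_mod_cast hdeg i0
      have h2 : 0 < |x i0| ^ q := Real.rpow_pos_of_pos (abs_pos.2 (by simpa using hi0)) q
      exact mul_pos h1 h2
  set s : Finset (Fin n × Fin n) :=
    Finset.univ.filter (fun e : Fin n × Fin n => G.Adj e.1 e.2) with hs_def
  have hA : ∑ e ∈ s, |x e.1 - x e.2| ^ q = 2 * TVp G q x := by
    rw [hs_def, st16_sum_filter G (fun i j => |x i - x j| ^ q)]
    unfold TVp; ring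
  have hL : ∑ e ∈ s, |(|x e.1| ^ (q/p) * Real.sign (x e.1)) -
      (|x e.2| ^ (q/p) * Real.sign (x e.2))| ^ p = 2 * TVp G p (Phi (q/p) x) := by
    rw [hs_def, st16_sum_filter G (fun i j => |(|x i| ^ (q/p) * Real.sign (x i)) -
      (|x j| ^ (q/p) * Real.sign (x j))| ^ p)]
    unfold TVp Phi; ring
  have hB : ∑ e ∈ s, (|x e.1| ^ q + |x e.2| ^ q) = 2 * Np G q x := by
    rw [hs_def, st16_sum_filter G (fun i j => |x i| ^ q + |x j| ^ q)]
    have h1 : ∀ i j : Fin n, (if G.Adj i j then |x i| ^ q + |x j| ^ q else 0) =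
        (if G.Adj i j then |x i| ^ q else 0) + (if G.Adj i j then |x j| ^ q else 0) := by
      intro i j; split <;> simp
    have hfirst : (∑ i : Fin n, ∑ j : Fin n, if G.Adj i j then |x i| ^ q else 0)
        = Np G q x := by
      unfold Np
      exact Finset.sum_congr rfl fun i _ => st16_degsum G (|x i| ^ q) i
    have hsecond : (∑ i : Fin n, ∑ j : Fin n, if G.Adj i j then |x j| ^ q else 0)
        = Np G q x := by
      rw [Finset.sum_comm]
      unfold Np
      refine Finset.sum_congr rfl fun j _ => ?_
      rw [show (∑ i : Fin n, if G.Adj i j then |x j| ^ q else 0)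
          = ∑ i : Fin n, if G.Adj j i then |x j| ^ q else 0 from
        Finset.sum_congr rfl fun i _ => if_congr (G.adj_comm i j) rfl rfl]
      exact st16_degsum G (|x j| ^ q) j
    calc (∑ i : Fin n, ∑ j : Fin n, if G.Adj i j then |x i| ^ q + |x j| ^ q else 0)
        = ∑ i : Fin n, ∑ j : Fin n, ((if G.Adj i j then |x i| ^ q else 0) +
            (if G.Adj i j then |x j| ^ q else 0)) :=
          Finset.sum_congr rfl fun i _ => Finset.sum_congr rfl fun j _ => h1 i j
      _ = (∑ i : Fin n, ∑ j : Fin n, if G.Adj i j then |x i| ^ q else 0)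
          + (∑ i : Fin n, ∑ j : Fin n, if G.Adj i j then |x j| ^ q else 0) := by
          rw [← Finset.sum_add_distrib]
          exact Finset.sum_congr rfl fun i _ => Finset.sum_add_distrib
      _ = 2 * Np G q x := by rw [hfirst, hsecond]; ring
  have hS0 : 0 ≤ TVp G p (Phi (q/p) x) := st16_TVp_nonneg G p _
  have hT0 : 0 ≤ TVp G q x := st16_TVp_nonneg G q x
  have hkey := st16_key_le s (fun e => x e.1) (fun e => x e.2) hp hpq
  beta_reduce at hkey
  rw [hA, hB, hL] at hkey
  have hmain := st16_final_le hp hpq hS0 hT0 hN hkey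
  constructor
  · constructor
    · simp only [Fp]
      rw [hNp_eq]
      exact hmain.1
    · simp only [Fp]
      rw [hNp_eq]
      exact hmain.2
  · intro hlt hFq
    have hT : 0 < TVp G q x := by
      simp only [Fp] at hFq
      rcases div_pos_iff.1 hFq with ⟨h1, _⟩ | ⟨_, h2⟩
      · exact h1
      · linarith
    have hAne : (∑ e ∈ s, |x e.1 - x e.2| ^ q) ≠ 0 := by
      rw [hA]; positivity
    obtain ⟨e0, he0, hae0⟩ := Finset.exists_ne_zero_of_sum_ne_zero hAne
    have hxe : x e0.1 ≠ x e0.2 := by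
      intro h
      exact hae0 (by rw [h, sub_self, abs_zero, Real.zero_rpow hq0.ne'])
    have hkey2 := st16_key_lt s (fun e => x e.1) (fun e => x e.2) hp hlt he0 hxe
    beta_reduce at hkey2
    rw [hA, hB, hL] at hkey2
    have hmain2 := st16_final_lt hp hpq hS0 hT0 hN hkey2
    constructor
    · simp only [Fp]
      rw [hNp_eq]
      exact hmain2.1
    · simp only [Fp]
      rw [hNp_eq]
      exact hmain2.2
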